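/- Friedrichs inequality from an orthonormal basis: let H be a Hilbert space, V a normed space compactly embedded in H, and {w_k} an orthonormal basis of H. Then for every ε > 0 there exists K_ε ∈ ℕ such that ‖v‖_H² ≤ Σ_{k=1}^{K_ε} |⟨v, w_k⟩_H|² + ε ‖v‖_V² for all v ∈ V. -/

import Mathlib

/-- Abstract Friedrichs inequality: if `V` is compactly embedded into a
Hilbert space `H` via `ι` and `{b_k}` is an orthonormal (Hilbert) basis of
`H`, then for every `ε > 0` there is `K_ε ∈ ℕ` with
`‖v‖_H² ≤ Σ_{k<K_ε} ⟨v, b_k⟩² + ε‖v‖_V²` for all `v ∈ V`. -/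
theorem abstract_friedrichs {H V : Type*}
    [NormedAddCommGroup H] [InnerProductSpace ℝ H]
    [NormedAddCommGroup V] [NormedSpace ℝ V]
    (ι : V →L[ℝ] H) (hinj : Function.Injective ι)
    (hcompact : IsCompactOperator ι)
    (b : HilbertBasis ℕ ℝ H) :
    ∀ ε : ℝ, 0 < ε → ∃ K : ℕ, ∀ v : V,
      ‖ι v‖ ^ 2 ≤
        (∑ k ∈ Finset.range K, (inner ℝ (ι v) (b k) : ℝ) ^ 2) + ε * ‖v‖ ^ 2 := by
  intro ε hε
  by_contra hcon
  push_neg at hcon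
  have hb := b.orthonormal
  set S : H → ℕ → ℝ := fun y K => ∑ k ∈ Finset.range K, (inner ℝ y (b k) : ℝ) ^ 2 with hSdef
  set P : H → ℕ → H := fun y K => ∑ k ∈ Finset.range K, (inner ℝ y (b k) : ℝ) • b k with hPdef
  -- key identity : ‖y - P y K‖² = ‖y‖² - S y K
  have hnormP : ∀ (y : H) (K : ℕ), ‖P y K‖ ^ 2 = S y K := by
    intro y K
    rw [← real_inner_self_eq_norm_sq]
    simpa [hPdef, hSdef, pow_two] using hb.inner_sum (fun k => (inner ℝ y (b k) : ℝ))
      (fun k => (inner ℝ y (b k) : ℝ)) (Finset.range K)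
  have keyid : ∀ (y : H) (K : ℕ), ‖y - P y K‖ ^ 2 = ‖y‖ ^ 2 - S y K := by
    intro y K
    rw [norm_sub_sq_real, hnormP]
    have h1 : (inner ℝ y (P y K) : ℝ) = S y K := by
      simp [hPdef, hSdef, inner_sum, real_inner_smul_right, sq]
    rw [h1]; ring
  have hPlin : ∀ (y z : H) (K : ℕ), P y K - P z K = P (y - z) K := by
    intro y z K
    simp [hPdef, inner_sub_left, sub_smul, Finset.sum_sub_distrib]
  have hPbound : ∀ (y z : H) (K : ℕ), ‖P y K - P z K‖ ≤ ‖y - z‖ := by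
    intro y z K
    rw [hPlin]
    have h1 : ‖P (y - z) K‖ ^ 2 ≤ ‖y - z‖ ^ 2 := by
      have := keyid (y - z) K
      nlinarith [sq_nonneg ‖(y - z) - P (y - z) K‖, hnormP (y - z) K]
    nlinarith [norm_nonneg (P (y - z) K), norm_nonneg (y - z)]
  -- compactness : a compact set M absorbing a small ball
  obtain ⟨M, hMc, hM⟩ := hcompact
  obtain ⟨δ, hδ, hball⟩ := Metric.mem_nhds_iff.mp hM
  set r : ℝ := δ / 2 with hrdef
  have hr : 0 < r := by positivity
  -- the violating sequence, normalized to norm r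
  choose v hv using hcon
  have hvne : ∀ K, v K ≠ 0 := by
    intro K hK
    have := hv K
    rw [hK] at this
    simp at this
  set c : ℕ → ℝ := fun K => r / ‖v K‖ with hcdef
  have hc : ∀ K, 0 < c K := fun K => div_pos hr (norm_pos_iff.mpr (hvne K))
  set u : ℕ → V := fun K => c K • v K with hudef
  have hunorm : ∀ K, ‖u K‖ = r := by
    intro K
    rw [hudef]
    simp only [norm_smul, Real.norm_eq_abs, abs_of_pos (hc K), hcdef]
    rw [abs_of_pos (div_pos hr (norm_pos_iff.mpr (hvne K)))]
    exact div_mul_cancel₀ r (norm_ne_zero_iff.mpr (hvne K))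
  set x : ℕ → H := fun K => ι (u K) with hxdef
  have hscaled : ∀ K, S (x K) K + ε * r ^ 2 < ‖x K‖ ^ 2 := by
    intro K
    have hιu : x K = c K • ι (v K) := by simp [hxdef, hudef, map_smul]
    have hS : S (x K) K = c K ^ 2 * S (ι (v K)) K := by
      rw [hSdef]
      simp only [hιu, real_inner_smul_left, mul_pow, Finset.mul_sum]
    have hn : ‖x K‖ ^ 2 = c K ^ 2 * ‖ι (v K)‖ ^ 2 := by
      rw [hιu, norm_smul, Real.norm_eq_abs, mul_pow, sq_abs]
    have hr2 : ε * r ^ 2 = c K ^ 2 * (ε * ‖v K‖ ^ 2) := by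
      have : r = c K * ‖v K‖ := by
        rw [hcdef]
        exact (div_mul_cancel₀ r (norm_ne_zero_iff.mpr (hvne K))).symm
      rw [this]; ring
    rw [hS, hn, hr2, ← mul_add]
    exact (mul_lt_mul_iff_right₀ (pow_pos (hc K) 2)).mpr (hv K)
  have hxM : ∀ K, x K ∈ M := by
    intro K
    apply hball
    simp only [Metric.mem_ball, dist_zero_right, hunorm K]
    rw [hrdef]; linarith
  obtain ⟨h, hhM, φ, hφ, hconv⟩ := hMc.tendsto_subseq hxM
  -- the tail quantity
  set t : ℕ → ℝ := fun j => ‖x (φ j) - P (x (φ j)) (φ j)‖ with htdef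
  have htlb : ∀ j, ε * r ^ 2 < t j ^ 2 := by
    intro j
    rw [htdef]
    simp only [keyid]
    have := hscaled (φ j)
    linarith
  -- t tends to 0
  have hd : Filter.Tendsto (fun j => ‖x (φ j) - h‖) Filter.atTop (nhds 0) :=
    tendsto_iff_norm_sub_tendsto_zero.mp hconv
  have hSh : Filter.Tendsto (fun K => S h K) Filter.atTop (nhds (‖h‖ ^ 2)) := by
    have := (b.hasSum_inner_mul_inner h h).tendsto_sum_nat
    simp only [real_inner_self_eq_norm_sq] at this
    refine this.congr ?_
    intro n
    refine Finset.sum_congr rfl fun k _ => ?_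
    rw [sq, real_inner_comm h (b k)]
  have hg2 : Filter.Tendsto (fun K => ‖h - P h K‖ ^ 2) Filter.atTop (nhds 0) := by
    simp only [keyid]
    have h0 : Filter.Tendsto (fun K => ‖h‖ ^ 2 - S h K) Filter.atTop
        (nhds (‖h‖ ^ 2 - ‖h‖ ^ 2)) := Filter.Tendsto.sub tendsto_const_nhds hSh
    simpa using h0
  have hg : Filter.Tendsto (fun K => ‖h - P h K‖) Filter.atTop (nhds 0) := by
    have h1 := (Real.continuous_sqrt.tendsto 0).comp hg2
    rw [Real.sqrt_zero] at h1
    refine h1.congr fun K => ?_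
    simp [Function.comp, Real.sqrt_sq (norm_nonneg (h - P h K))]
  have hgφ : Filter.Tendsto (fun j => ‖h - P h (φ j)‖) Filter.atTop (nhds 0) :=
    hg.comp hφ.tendsto_atTop
  have htb : ∀ j, t j ≤ 2 * ‖x (φ j) - h‖ + ‖h - P h (φ j)‖ := by
    intro j
    have e1 : x (φ j) - P (x (φ j)) (φ j) =
        (x (φ j) - h) + (h - P h (φ j)) + (P h (φ j) - P (x (φ j)) (φ j)) := by abel
    calc t j = ‖(x (φ j) - h) + (h - P h (φ j)) + (P h (φ j) - P (x (φ j)) (φ j))‖ := by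
            simp only [htdef]; rw [e1]
      _ ≤ ‖(x (φ j) - h) + (h - P h (φ j))‖ + ‖P h (φ j) - P (x (φ j)) (φ j)‖ := norm_add_le _ _
      _ ≤ (‖x (φ j) - h‖ + ‖h - P h (φ j)‖) + ‖h - x (φ j)‖ :=
            add_le_add (norm_add_le _ _) (hPbound _ _ _)
      _ = 2 * ‖x (φ j) - h‖ + ‖h - P h (φ j)‖ := by
            rw [norm_sub_rev h (x (φ j))]; ring
  have ht0 : Filter.Tendsto t Filter.atTop (nhds 0) := by
    refine squeeze_zero (fun j => norm_nonneg _) htb ?_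
    simpa using ((hd.const_mul 2).add hgφ)
  have ht20 : Filter.Tendsto (fun j => t j ^ 2) Filter.atTop (nhds 0) := by
    simpa using ht0.pow 2
  have hev : ∀ᶠ j in Filter.atTop, t j ^ 2 < ε * r ^ 2 :=
    ht20.eventually (eventually_lt_nhds (show (0:ℝ) < ε * r ^ 2 by positivity))
  obtain ⟨j, hj⟩ := hev.exists
  exact absurd (htlb j) (not_lt.mpr hj.le)
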